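/- Let n be a positive integer, G a subgroup of S_n acting on ℕ^n on positions, and d ≥ 0. Call a vector 'tested' if it is the root (0,…,0) or a child of a canonical vector. Then the number of tested vectors of degree at most d minus the number of canonical vectors of degree at most d is bounded above by the number of non-canonical vectors of degree exactly d; i.e., Σ_{i=0}^{d} T(i) − Σ_{i=0}^{d} C(i) ≤ C̄(d), where T(i), C(i), C̄(i) denote respectively the number of tested, canonical, and non-canonical vectors of degree i. -/

import Mathlib

variable {n : ℕ}

/-- Action of a permutation on integer vectors, on positions: `(σ·v)_i = v_{σ⁻¹(i)}`. -/
def act (σ : Equiv.Perm (Fin n)) (v : Fin n → ℕ) : Fin n → ℕ := fun i => v (σ⁻¹ i)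

/-- `v` is canonical under `G` if it is the lexicographically greatest element of its orbit. -/
def IsCanonical (G : Subgroup (Equiv.Perm (Fin n))) (v : Fin n → ℕ) : Prop :=
  ∀ σ ∈ G, toLex (act σ v) ≤ toLex v

/-- Position of the last nonzero entry of `v` (position `0` if `v = 0`). -/
def lastNZ [NeZero n] (v : Fin n → ℕ) : Fin n :=
  if h : v = 0 then 0
  else ((Finset.univ : Finset (Fin n)).filter fun i => v i ≠ 0).max'
    (by obtain ⟨i, hi⟩ := Function.ne_iff.mp h
        exact ⟨i, Finset.mem_filter.mpr ⟨Finset.mem_univ i, hi⟩⟩)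

/-- The father of a vector: decrement its last nonzero entry (fixes the zero vector). -/
def father [NeZero n] (v : Fin n → ℕ) : Fin n → ℕ :=
  Function.update v (lastNZ v) (v (lastNZ v) - 1)

/-- The children of a vector: increment the last nonzero entry, or set a later entry to 1. -/
def children [NeZero n] (v : Fin n → ℕ) : Set (Fin n → ℕ) :=
  insert (Function.update v (lastNZ v) (v (lastNZ v) + 1))
    {w | ∃ j : Fin n, lastNZ v < j ∧ w = Function.update v j 1}

/-- A vector is tested by the orderly generation strategy if it is the root or a
child of a canonical vector. -/
def Tested [NeZero n] (G : Subgroup (Equiv.Perm (Fin n))) (v : Fin n → ℕ) : Prop :=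
  v = 0 ∨ ∃ u : Fin n → ℕ, IsCanonical G u ∧ v ∈ children u

section Lemmas
variable [NeZero n]
set_option linter.unusedSectionVars false

lemma lastNZ_ge {v : Fin n → ℕ} {i : Fin n} (h : v i ≠ 0) : i ≤ lastNZ v := by
  have hv : v ≠ 0 := fun hc => h (by rw [hc]; rfl)
  rw [lastNZ, dif_neg hv]
  exact Finset.le_max' _ _ (Finset.mem_filter.mpr ⟨Finset.mem_univ i, h⟩)

lemma lastNZ_apply_ne {v : Fin n → ℕ} (hv : v ≠ 0) : v (lastNZ v) ≠ 0 := by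
  rw [lastNZ, dif_neg hv]
  have := Finset.max'_mem ((Finset.univ : Finset (Fin n)).filter fun i => v i ≠ 0)
    (by obtain ⟨i, hi⟩ := Function.ne_iff.mp hv
        exact ⟨i, Finset.mem_filter.mpr ⟨Finset.mem_univ i, hi⟩⟩)
  exact (Finset.mem_filter.mp this).2

lemma apply_eq_zero_of_lastNZ_lt {v : Fin n → ℕ} {i : Fin n} (h : lastNZ v < i) : v i = 0 := by
  by_contra hc
  exact absurd (lastNZ_ge hc) (not_le.mpr h)

lemma lastNZ_eq {v : Fin n → ℕ} {J : Fin n} (hJ : v J ≠ 0) (ht : ∀ i, J < i → v i = 0) :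
    lastNZ v = J := by
  refine le_antisymm ?_ (lastNZ_ge hJ)
  by_contra hc
  exact lastNZ_apply_ne (fun h0 => hJ (by rw [h0]; rfl)) (ht _ (not_le.mp hc))

lemma act_update (σ : Equiv.Perm (Fin n)) (v : Fin n → ℕ) (j : Fin n) (x : ℕ) :
    act σ (Function.update v j x) = Function.update (act σ v) (σ j) x := by
  funext i
  simp only [act, Function.update]
  by_cases h : i = σ j
  · subst h; simp
  · rw [dif_neg, dif_neg h]
    simpa [Equiv.Perm.inv_eq_iff_eq, Equiv.symm_apply_eq] using h

lemma act_apply (σ : Equiv.Perm (Fin n)) (v : Fin n → ℕ) (j : Fin n) : act σ v (σ j) = v j := by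
  simp [act]

lemma sum_act (σ : Equiv.Perm (Fin n)) (v : Fin n → ℕ) : ∑ i, act σ v i = ∑ i, v i :=
  Equiv.sum_comp σ⁻¹ v

lemma sum_update (v : Fin n → ℕ) (j : Fin n) (x : ℕ) :
    (∑ i, Function.update v j x i) + v j = (∑ i, v i) + x := by
  rw [Finset.sum_update_of_mem (Finset.mem_univ j),
    ← Finset.sum_erase_add Finset.univ v (Finset.mem_univ j)]
  ring_nf
  rw [Finset.sdiff_singleton_eq_erase]
  ring

lemma canonical_zero (G : Subgroup (Equiv.Perm (Fin n))) : IsCanonical G (0 : Fin n → ℕ) := by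
  intro σ hσ
  have : act σ (0 : Fin n → ℕ) = 0 := rfl
  rw [this]

lemma lex_tot (a b : Fin n → ℕ) :
    toLex a ≤ toLex b ∨ ∃ i, (∀ j, j < i → b j = a j) ∧ b i < a i := by
  have ht := (Pi.isTrichotomous_lex (fun x y : Fin n => x < y) (fun {i} (x y : ℕ) => x < y)
      (IsWellFounded.wf)).trichotomous a b
  by_cases h1 : toLex a < toLex b
  · exact Or.inl (le_of_lt h1)
  by_cases h2 : toLex b < toLex a
  · exact Or.inr h2
  · exact Or.inl (le_of_eq (congrArg toLex (ht h1 h2)))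

lemma tail_sum {a b : Fin n → ℕ} {j : Fin n} (hsum : ∑ i, b i = ∑ i, a i)
    (hhead : ∀ i, i < j → b i = a i) :
    ∑ i ∈ Finset.univ.filter (fun i => ¬ i < j), b i
      = ∑ i ∈ Finset.univ.filter (fun i => ¬ i < j), a i := by
  have h1 := Finset.sum_filter_add_sum_filter_not Finset.univ (fun i => i < j) b
  have h2 := Finset.sum_filter_add_sum_filter_not Finset.univ (fun i => i < j) a
  have h3 : ∑ i ∈ Finset.univ.filter (fun i => i < j), b i
      = ∑ i ∈ Finset.univ.filter (fun i => i < j), a i :=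
    Finset.sum_congr rfl (fun i hi => hhead i (Finset.mem_filter.mp hi).2)
  omega

lemma tail_single {a : Fin n → ℕ} {j : Fin n} (ht : ∀ i, j < i → a i = 0) :
    ∑ i ∈ Finset.univ.filter (fun i => ¬ i < j), a i = a j := by
  refine Finset.sum_eq_single_of_mem j (by simp) (fun i hi hne => ?_)
  exact ht i (lt_of_le_of_ne (not_lt.mp (Finset.mem_filter.mp hi).2) (Ne.symm hne))

theorem father_canonical {G : Subgroup (Equiv.Perm (Fin n))} {v : Fin n → ℕ}
    (hv : IsCanonical G v) : IsCanonical G (father v) := by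
  by_cases h0 : v = 0
  · subst h0
    have hf : father (0 : Fin n → ℕ) = 0 := by
      rw [father]; simp
    rw [hf]; exact hv
  · intro σ hσ
    have haj : v (lastNZ v) ≠ 0 := lastNZ_apply_ne h0
    set j := lastNZ v with hj
    have htail : ∀ i, j < i → v i = 0 := fun i hi => apply_eq_zero_of_lastNZ_lt hi
    have hba := hv σ hσ
    have hbσj : act σ v (σ j) = v j := act_apply σ v j
    have hsum : ∑ i, act σ v i = ∑ i, v i := sum_act σ v
    set b := act σ v with hbdef
    rw [father, ← hj, act_update]
    rcases lex_tot (Function.update b (σ j) (v j - 1)) (Function.update v j (v j - 1))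
      with h | ⟨m, hm, hlt⟩
    · exact h
    exfalso
    simp only [Function.update_apply] at hm hlt
    rcases hba.lt_or_eq with hstrict | heqq
    · -- strict case : b <lex v with first difference at p
      obtain ⟨p, hp, hplt⟩ := hstrict
      simp only [Pi.toLex_apply] at hp hplt
      have hpj : p ≤ j := by
        by_contra hc
        rw [htail p (not_le.mp hc)] at hplt
        omega
      rcases lt_trichotomy m p with hmp | hmp | hmp
      · -- m < p
        have hbm : b m = v m := hp m hmp
        have hmj : m ≠ j := fun h => absurd (h ▸ hmp) (not_lt.mpr hpj)
        rw [if_neg hmj] at hlt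
        by_cases hmσ : m = σ j
        · rw [if_pos hmσ] at hlt
          have hbσ : b (σ j) = v (σ j) := hp (σ j) (hmσ ▸ hmp)
          rw [hbσj] at hbσ
          rw [← hmσ] at hbσ
          omega
        · rw [if_neg hmσ, hbm] at hlt
          omega
      · -- m = p
        subst hmp
        by_cases hmj : m = j <;> by_cases hmσ : m = σ j
        · rw [if_pos hmj, if_pos hmσ] at hlt; omega
        · rw [if_pos hmj, if_neg hmσ] at hlt
          rw [hmj] at hplt hlt
          omega
        · rw [if_neg hmj, if_pos hmσ] at hlt
          rw [hmσ] at hplt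
          rw [hbσj] at hplt
          rw [← hmσ] at hplt
          omega
        · rw [if_neg hmj, if_neg hmσ] at hlt
          omega
      · -- p < m
        have hpp := hm p hmp
        by_cases hpj' : p = j <;> by_cases hpσ : p = σ j
        · -- p = j = σ j
          rw [hpσ, hbσj, ← hpσ, hpj'] at hplt
          omega
        · -- p = j ≠ σ j : the main case
          rw [hpj'] at hp hplt hpp hmp hpσ
          rw [if_pos rfl, if_neg hpσ] at hpp
          -- hpp : v j - 1 = b j
          have hσgt : j < σ j := by
            rcases lt_trichotomy (σ j) j with hc | hc | hc
            · exfalso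
              have hσj : σ j ≠ j := ne_of_lt hc
              have h1 : b (σ j) = v (σ j) := hp (σ j) hc
              have h2 := hm (σ j) (lt_trans hc hmp)
              rw [if_neg hσj, if_pos rfl] at h2
              rw [hbσj] at h1
              omega
            · exact absurd hc.symm hpσ
            · exact hc
          have hts := tail_sum hsum hp
          rw [tail_single htail] at hts
          have hsub : ({j, σ j} : Finset (Fin n)) ⊆
              Finset.univ.filter (fun i => ¬ i < j) := by
            intro x hx
            simp only [Finset.mem_insert, Finset.mem_singleton] at hx
            simp only [Finset.mem_filter, Finset.mem_univ, true_and, not_lt]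
            rcases hx with rfl | rfl
            · exact le_refl _
            · exact hσgt.le
          have hpair : ∑ i ∈ ({j, σ j} : Finset (Fin n)), b i = b j + b (σ j) :=
            Finset.sum_pair (fun h => hpσ h)
          have hle : b j + b (σ j) ≤ v j := by
            rw [← hpair, ← hts]
            exact Finset.sum_le_sum_of_subset hsub
          rw [hbσj] at hle
          -- (v j - 1) + v j ≤ v j  ⇒ v j = 1, b j = 0
          have hvp1 : v j = 1 := by omega
          have hmj : m ≠ j := ne_of_gt hmp
          have hvm : v m = 0 := htail m hmp
          rw [if_neg hmj, hvm] at hlt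
          by_cases hmσ : m = σ j
          · rw [if_pos hmσ, hvp1] at hlt; omega
          · rw [if_neg hmσ] at hlt
            have hsub3 : ({m, j, σ j} : Finset (Fin n)) ⊆
                Finset.univ.filter (fun i => ¬ i < j) := by
              intro x hx
              simp only [Finset.mem_insert, Finset.mem_singleton] at hx
              simp only [Finset.mem_filter, Finset.mem_univ, true_and, not_lt]
              rcases hx with rfl | rfl | rfl
              · exact hmp.le
              · exact le_refl _
              · exact hσgt.le
            have htriple : ∑ i ∈ ({m, j, σ j} : Finset (Fin n)), b i
                = b m + (b j + b (σ j)) := by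
              rw [Finset.sum_insert, hpair]
              simp only [Finset.mem_insert, Finset.mem_singleton]
              push_neg
              exact ⟨hmj, hmσ⟩
            have hle3 : b m + (b j + b (σ j)) ≤ v j := by
              rw [← htriple, ← hts]
              exact Finset.sum_le_sum_of_subset hsub3
            rw [hbσj] at hle3
            omega
        · -- p = σ j ≠ j
          rw [if_neg hpj', if_pos hpσ] at hpp
          rw [hpσ, hbσj, ← hpσ] at hplt
          omega
        · rw [if_neg hpj', if_neg hpσ] at hpp
          omega
    · -- equality case : b = v
      have heq : b = v := toLex.injective heqq
      have hσvj : v (σ j) = v j := by rw [← hbσj, heq]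
      rw [heq] at hm hlt
      rcases lt_trichotomy (σ j) j with hc | hc | hc
      · -- σ j < j
        rcases lt_or_ge (σ j) m with h1 | h1
        · have h2 := hm (σ j) h1
          rw [if_neg (ne_of_lt hc), if_pos rfl, hσvj] at h2
          omega
        · rcases eq_or_lt_of_le h1 with h2 | h2
          · have hmj : m ≠ j := by rw [h2]; exact ne_of_lt hc
            rw [if_neg hmj, if_pos h2, h2, hσvj] at hlt
            omega
          · have hmj : m ≠ j := ne_of_lt (lt_trans h2 hc)
            rw [if_neg hmj, if_neg (ne_of_lt h2)] at hlt
            omega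
      · -- σ j = j
        rw [hc] at hlt
        split_ifs at hlt <;> omega
      · -- j < σ j
        exact haj (by rw [← hσvj]; exact htail _ hc)

def pump [NeZero n] (v : Fin n → ℕ) (k : ℕ) : Fin n → ℕ :=
  Function.update v (lastNZ v) (v (lastNZ v) + k)

section Lemmas2
variable [NeZero n]
set_option linter.unusedSectionVars false

lemma pump_lastNZ {v : Fin n → ℕ} (hv : v ≠ 0) (k : ℕ) : lastNZ (pump v k) = lastNZ v := by
  apply lastNZ_eq
  · rw [pump, Function.update_self]
    have := lastNZ_apply_ne hv
    omega
  · intro i hi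
    rw [pump, Function.update_of_ne (ne_of_gt hi)]
    exact apply_eq_zero_of_lastNZ_lt hi

lemma pump_zero (v : Fin n → ℕ) : pump v 0 = v := by
  rw [pump, add_zero, Function.update_eq_self]

lemma pump_ne_zero {v : Fin n → ℕ} (hv : v ≠ 0) (k : ℕ) : pump v k ≠ 0 := by
  intro h
  have h2 := congrFun h (lastNZ v)
  rw [pump, Function.update_self] at h2
  simp only [Pi.zero_apply] at h2
  have := lastNZ_apply_ne hv
  omega

lemma pump_sum (v : Fin n → ℕ) (k : ℕ) : ∑ i, pump v k i = (∑ i, v i) + k := by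
  have := sum_update v (lastNZ v) (v (lastNZ v) + k)
  simp only [pump]
  omega

lemma pump_succ_father {v : Fin n → ℕ} (hv : v ≠ 0) (k : ℕ) :
    father (pump v (k + 1)) = pump v k := by
  rw [father, pump_lastNZ hv]
  rw [pump, Function.update_self, Function.update_idem]
  have h1 : v (lastNZ v) + (k + 1) - 1 = v (lastNZ v) + k := by omega
  rw [h1, pump]

lemma pump_canonical {G : Subgroup (Equiv.Perm (Fin n))} {v : Fin n → ℕ} (hv : v ≠ 0) :
    ∀ k, IsCanonical G (pump v k) → IsCanonical G v := by
  intro k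
  induction k with
  | zero => rw [pump_zero]; exact id
  | succ k ih =>
      intro h
      have h2 := father_canonical h
      rw [pump_succ_father hv] at h2
      exact ih h2

lemma pump_comp {v : Fin n → ℕ} (hv : v ≠ 0) (a b : ℕ) :
    pump (pump v a) b = pump v (a + b) := by
  conv_lhs => rw [pump, pump_lastNZ hv]
  rw [pump, Function.update_self, Function.update_idem]
  have h1 : v (lastNZ v) + a + b = v (lastNZ v) + (a + b) := by omega
  rw [h1, pump]

lemma pump_recover {v : Fin n → ℕ} (hv : v ≠ 0) (k : ℕ) :
    Function.update (pump v k) (lastNZ (pump v k)) (pump v k (lastNZ (pump v k)) - k) = v := by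
  rw [pump_lastNZ hv, pump, Function.update_self, Function.update_idem]
  have h : v (lastNZ v) + k - k = v (lastNZ v) := by omega
  rw [h, Function.update_eq_self]

lemma pump_inj {v w : Fin n → ℕ} (hv : v ≠ 0) (hw : w ≠ 0) (k : ℕ)
    (h : pump v k = pump w k) : v = w := by
  rw [← pump_recover hv k, h, pump_recover hw k]

lemma children_spec {u w : Fin n → ℕ} (h : w ∈ children u) :
    father w = u ∧ (∑ i, w i) = (∑ i, u i) + 1 ∧ w ≠ 0 := by
  have hzt : ∀ i, lastNZ u < i → u i = 0 := fun i hi => apply_eq_zero_of_lastNZ_lt hi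
  rcases Set.mem_insert_iff.mp h with rfl | ⟨J, hJ, rfl⟩
  · have hlast : lastNZ (Function.update u (lastNZ u) (u (lastNZ u) + 1)) = lastNZ u := by
      apply lastNZ_eq
      · rw [Function.update_self]; omega
      · intro i hi
        rw [Function.update_of_ne (ne_of_gt hi)]
        exact hzt i hi
    refine ⟨?_, ?_, ?_⟩
    · rw [father, hlast, Function.update_self, Function.update_idem]
      have h1 : u (lastNZ u) + 1 - 1 = u (lastNZ u) := by omega
      rw [h1, Function.update_eq_self]
    · have := sum_update u (lastNZ u) (u (lastNZ u) + 1)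
      omega
    · intro h0
      have h2 := congrFun h0 (lastNZ u)
      rw [Function.update_self] at h2
      simp at h2
  · have huJ : u J = 0 := hzt J hJ
    have hlast : lastNZ (Function.update u J 1) = J := by
      apply lastNZ_eq
      · rw [Function.update_self]; omega
      · intro i hi
        rw [Function.update_of_ne (ne_of_gt hi)]
        exact hzt i (lt_trans hJ hi)
    refine ⟨?_, ?_, ?_⟩
    · rw [father, hlast, Function.update_self, Function.update_idem]
      have h1 : (1 : ℕ) - 1 = u J := by omega
      rw [h1, Function.update_eq_self]
    · have := sum_update u J 1
      omega
    · intro h0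
      have h2 := congrFun h0 J
      rw [Function.update_self] at h2
      simp at h2

lemma tested_father_canonical {G : Subgroup (Equiv.Perm (Fin n))} {w : Fin n → ℕ}
    (h : Tested G w) (h0 : w ≠ 0) : IsCanonical G (father w) := by
  rcases h with h | ⟨u, hu, hc⟩
  · exact absurd h h0
  · rw [(children_spec hc).1]; exact hu

lemma sphere_finite (i : ℕ) : {v : Fin n → ℕ | ∑ j, v j = i}.Finite := by
  apply Set.Finite.subset (Set.finite_Icc (0 : Fin n → ℕ) (fun _ => i))
  intro v hv
  simp only [Set.mem_setOf_eq] at hv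
  rw [Set.mem_Icc]
  refine ⟨fun j => Nat.zero_le _, fun j => ?_⟩
  rw [← hv]
  exact Finset.single_le_sum (fun _ _ => Nat.zero_le _) (Finset.mem_univ j)

lemma sum_ncard_le {α : Type*} (A : ℕ → Set α) :
    ∀ (s : Finset ℕ) (N : Set α), N.Finite → (∀ i ∈ s, A i ⊆ N) →
    (∀ i ∈ s, ∀ k ∈ s, i ≠ k → Disjoint (A i) (A k)) →
    ∑ i ∈ s, (A i).ncard ≤ N.ncard := by
  intro s
  induction s using Finset.induction with
  | empty => intro N _ _ _; simp
  | @insert a s ha ih =>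
      intro N hN hsub hdis
      rw [Finset.sum_insert ha]
      have h1 : A a ⊆ N := hsub a (Finset.mem_insert_self a s)
      have h2 : ∀ i ∈ s, A i ⊆ N \ A a := by
        intro i hi x hx
        refine ⟨hsub i (Finset.mem_insert_of_mem hi) hx, ?_⟩
        exact Set.disjoint_left.mp
          (hdis i (Finset.mem_insert_of_mem hi) a (Finset.mem_insert_self a s)
            (fun h => ha (h ▸ hi))) hx
      have ih' := ih (N \ A a) hN.diff h2
        (fun i hi k hk hik =>
          hdis i (Finset.mem_insert_of_mem hi) k (Finset.mem_insert_of_mem hk) hik)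
      have h3 : (N \ A a).ncard = N.ncard - (A a).ncard := Set.ncard_diff h1 (hN.subset h1)
      have h4 : (A a).ncard ≤ N.ncard := Set.ncard_le_ncard h1 hN
      omega

end Lemmas2

/-- `Σ_{i≤d} T(i) − Σ_{i≤d} C(i) ≤ C̄(d)`: the number of tested vectors of degree at
most `d` exceeds the number of canonical vectors of degree at most `d` by at most the
number of non-canonical vectors of degree exactly `d`. -/
theorem stmt8 (n : ℕ) [NeZero n] (G : Subgroup (Equiv.Perm (Fin n))) (d : ℕ) :
    (∑ i ∈ Finset.range (d + 1),
        {v : Fin n → ℕ | Tested G v ∧ ∑ j, v j = i}.ncard) -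
      (∑ i ∈ Finset.range (d + 1),
        {v : Fin n → ℕ | IsCanonical G v ∧ ∑ j, v j = i}.ncard) ≤
    {v : Fin n → ℕ | ¬ IsCanonical G v ∧ ∑ j, v j = d}.ncard := by
  classical
  set N := {v : Fin n → ℕ | ¬ IsCanonical G v ∧ ∑ j, v j = d} with hN
  set D : ℕ → Set (Fin n → ℕ) :=
    fun i => {v | Tested G v ∧ ¬ IsCanonical G v ∧ ∑ j, v j = i} with hD
  have hNfin : N.Finite := (sphere_finite d).subset (fun v hv => hv.2)
  have hDfin : ∀ i, (D i).Finite := fun i => (sphere_finite i).subset (fun v hv => hv.2.2)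
  have hCfin : ∀ i, ({v : Fin n → ℕ | IsCanonical G v ∧ ∑ j, v j = i}).Finite :=
    fun i => (sphere_finite i).subset (fun v hv => hv.2)
  have step1 : ∀ i, {v : Fin n → ℕ | Tested G v ∧ ∑ j, v j = i}.ncard
      ≤ {v : Fin n → ℕ | IsCanonical G v ∧ ∑ j, v j = i}.ncard + (D i).ncard := by
    intro i
    have hsub : {v : Fin n → ℕ | Tested G v ∧ ∑ j, v j = i}
        ⊆ {v : Fin n → ℕ | IsCanonical G v ∧ ∑ j, v j = i} ∪ D i := by
      intro v hv
      by_cases hc : IsCanonical G v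
      · exact Or.inl ⟨hc, hv.2⟩
      · exact Or.inr ⟨hv.1, hc, hv.2⟩
    exact (Set.ncard_le_ncard hsub ((hCfin i).union (hDfin i))).trans
      (Set.ncard_union_le _ _)
  have hDmem : ∀ i v, v ∈ D i → Tested G v ∧ ¬ IsCanonical G v ∧ ∑ j, v j = i := by
    intro i v hv
    simpa only [hD, Set.mem_setOf_eq] using hv
  have hDnz : ∀ i v, v ∈ D i → v ≠ 0 := by
    intro i v hv h0
    exact (hDmem i v hv).2.1 (by rw [h0]; exact canonical_zero G)
  set A : ℕ → Set (Fin n → ℕ) := fun i => (fun v => pump v (d - i)) '' D i with hA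
  have hAmem : ∀ i w, w ∈ A i → ∃ v, v ∈ D i ∧ pump v (d - i) = w := by
    intro i w hw
    obtain ⟨v, hv, he⟩ := hw
    exact ⟨v, hv, he⟩
  have hcard : ∀ i, (D i).ncard = (A i).ncard := fun i =>
    (Set.ncard_image_of_injOn
      (fun v hv w hw h => pump_inj (hDnz i v hv) (hDnz i w hw) _ h)).symm
  have hAsub : ∀ i ∈ Finset.range (d + 1), A i ⊆ N := by
    intro i hi w hw
    obtain ⟨v, hv, he⟩ := hAmem i w hw
    have hik : i ≤ d := Nat.lt_succ_iff.mp (Finset.mem_range.mp hi)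
    simp only [hN, Set.mem_setOf_eq]
    rw [← he]
    constructor
    · intro hc
      exact (hDmem i v hv).2.1 (pump_canonical (hDnz i v hv) _ hc)
    · rw [pump_sum, (hDmem i v hv).2.2]
      omega
  have key : ∀ i k, i < k → k ≤ d → ∀ w, w ∈ A i → w ∈ A k → False := by
    intro i k hik hkd w hwi hwk
    obtain ⟨v1, hv1, he1⟩ := hAmem i w hwi
    obtain ⟨v2, hv2, he2⟩ := hAmem k w hwk
    have h1 : pump (pump v1 (k - i)) (d - k) = pump v2 (d - k) := by
      rw [pump_comp (hDnz i v1 hv1)]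
      have h5 : k - i + (d - k) = d - i := by omega
      rw [h5, he1, he2]
    have h2 : pump v1 (k - i) = v2 :=
      pump_inj (pump_ne_zero (hDnz _ _ hv1) _) (hDnz _ _ hv2) _ h1
    have h3 : IsCanonical G (father v2) :=
      tested_father_canonical (hDmem _ _ hv2).1 (hDnz _ _ hv2)
    rw [← h2] at h3
    have h4 : k - i = (k - i - 1) + 1 := by omega
    rw [h4, pump_succ_father (hDnz _ _ hv1)] at h3
    exact (hDmem _ _ hv1).2.1 (pump_canonical (hDnz _ _ hv1) _ h3)
  have hAdis : ∀ i ∈ Finset.range (d + 1), ∀ k ∈ Finset.range (d + 1),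
      i ≠ k → Disjoint (A i) (A k) := by
    intro i hi k hk hik
    rw [Set.disjoint_left]
    intro w hwi hwk
    rcases lt_or_gt_of_ne hik with h | h
    · exact key i k h (Nat.lt_succ_iff.mp (Finset.mem_range.mp hk)) w hwi hwk
    · exact key k i h (Nat.lt_succ_iff.mp (Finset.mem_range.mp hi)) w hwk hwi
  have step3 : ∑ i ∈ Finset.range (d + 1), (D i).ncard ≤ N.ncard := by
    calc ∑ i ∈ Finset.range (d + 1), (D i).ncard
        = ∑ i ∈ Finset.range (d + 1), (A i).ncard :=
          Finset.sum_congr rfl (fun i _ => hcard i)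
      _ ≤ N.ncard := sum_ncard_le A _ N hNfin hAsub hAdis
  have step2 : (∑ i ∈ Finset.range (d + 1),
        {v : Fin n → ℕ | Tested G v ∧ ∑ j, v j = i}.ncard)
      ≤ (∑ i ∈ Finset.range (d + 1),
        {v : Fin n → ℕ | IsCanonical G v ∧ ∑ j, v j = i}.ncard)
        + ∑ i ∈ Finset.range (d + 1), (D i).ncard := by
    rw [← Finset.sum_add_distrib]
    exact Finset.sum_le_sum (fun i _ => step1 i)
  rw [tsub_le_iff_right]
  calc (∑ i ∈ Finset.range (d + 1),
        {v : Fin n → ℕ | Tested G v ∧ ∑ j, v j = i}.ncard)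
      ≤ (∑ i ∈ Finset.range (d + 1),
        {v : Fin n → ℕ | IsCanonical G v ∧ ∑ j, v j = i}.ncard)
        + ∑ i ∈ Finset.range (d + 1), (D i).ncard := step2
    _ ≤ (∑ i ∈ Finset.range (d + 1),
        {v : Fin n → ℕ | IsCanonical G v ∧ ∑ j, v j = i}.ncard) + N.ncard :=
          Nat.add_le_add_left step3 _
    _ = N.ncard + (∑ i ∈ Finset.range (d + 1),
        {v : Fin n → ℕ | IsCanonical G v ∧ ∑ j, v j = i}.ncard) := Nat.add_comm _ _
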